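/- arXiv:1512.02549 — 2 statements merged into one kernel-verified Lean document; each statement's English description precedes it below -/
import Mathlib

section
/- For the cone S^n_+ of n×n symmetric positive semidefinite matrices, the distance to polyhedrality is n − 1: the longest strictly ascending chain of nonempty faces F_1 ⊊ ... ⊊ F_ℓ with F_1 polyhedral and F_j nonpolyhedral for j > 1 has length n. -/
/-- A face of a convex cone (in the space of `n × n` real matrices). -/
def IsFace {n : ℕ} (K F : Set (Matrix (Fin n) (Fin n) ℝ)) : Prop :=
  F ⊆ K ∧ Convex ℝ F ∧ (∀ x ∈ F, ∀ t : ℝ, 0 ≤ t → t • x ∈ F) ∧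
    ∀ x ∈ K, ∀ y ∈ K, x + y ∈ F → x ∈ F ∧ y ∈ F

/-- A polyhedral cone: a finite intersection of half-spaces given by linear functionals. -/
def IsPolyhedralCone {n : ℕ} (K : Set (Matrix (Fin n) (Fin n) ℝ)) : Prop :=
  ∃ s : Finset (Matrix (Fin n) (Fin n) ℝ →ₗ[ℝ] ℝ), K = {x | ∀ f ∈ s, 0 ≤ f x}

/-- A strictly ascending chain of nonempty faces of `K`. -/
def IsFaceChain {n : ℕ} (K : Set (Matrix (Fin n) (Fin n) ℝ)) (ℓ : ℕ)
    (F : Fin ℓ → Set (Matrix (Fin n) (Fin n) ℝ)) : Prop :=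
  StrictMono F ∧ ∀ i, IsFace K (F i) ∧ (F i).Nonempty

/-- A chain witnessing the distance to polyhedrality: first face polyhedral,
subsequent faces nonpolyhedral. -/
def IsPolyChain {n : ℕ} (K : Set (Matrix (Fin n) (Fin n) ℝ)) (ℓ : ℕ)
    (F : Fin ℓ → Set (Matrix (Fin n) (Fin n) ℝ)) : Prop :=
  IsFaceChain K ℓ F ∧ (∀ i : Fin ℓ, i.val = 0 → IsPolyhedralCone (F i)) ∧
    (∀ i : Fin ℓ, 0 < i.val → ¬ IsPolyhedralCone (F i))

open Matrix
set_option synthInstance.maxHeartbeats 1000000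
set_option maxHeartbeats 1000000

namespace Stmt12Aux

variable {n : ℕ}

abbrev Mat (n : ℕ) := Matrix (Fin n) (Fin n) ℝ

def entryLM (n : ℕ) (i j : Fin n) : Mat n →ₗ[ℝ] ℝ where
  toFun X := X i j
  map_add' _ _ := rfl
  map_smul' _ _ := rfl

@[simp] lemma entryLM_apply (i j : Fin n) (X : Mat n) : entryLM n i j X = X i j := rfl

lemma psd_smul {X : Mat n} (hX : X.PosSemidef) {c : ℝ} (hc : 0 ≤ c) :
    (c • X).PosSemidef := by
  refine posSemidef_iff_dotProduct_mulVec.mpr ⟨?_, fun x => ?_⟩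
  · unfold Matrix.IsHermitian
    rw [conjTranspose_smul, hX.1]
    simp
  · have := hX.dotProduct_mulVec_nonneg x
    simp only [smul_mulVec, dotProduct_smul, smul_eq_mul]
    positivity

lemma vvT_psd (v : Fin n → ℝ) : (vecMulVec v v).PosSemidef := by
  refine posSemidef_iff_dotProduct_mulVec.mpr ⟨?_, fun x => ?_⟩
  · ext i j
    simp [conjTranspose_apply, vecMulVec_apply, mul_comm]
  · have h : star x ⬝ᵥ (vecMulVec v v) *ᵥ x = (∑ i, v i * x i) * (∑ j, v j * x j) := by
      rw [Finset.sum_mul_sum]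
      simp only [star_trivial, dotProduct, mulVec, vecMulVec_apply]
      simp only [dotProduct, Finset.mul_sum]
      exact Finset.sum_congr rfl fun i _ => Finset.sum_congr rfl fun j _ => by ring
    rw [h]
    exact mul_self_nonneg _

lemma vvT_quadform (v x : Fin n → ℝ) :
    x ⬝ᵥ (vecMulVec v v) *ᵥ x = (v ⬝ᵥ x) * (v ⬝ᵥ x) := by
  show x ⬝ᵥ (vecMulVec v v) *ᵥ x = (∑ i, v i * x i) * (∑ j, v j * x j)
  rw [Finset.sum_mul_sum]
  simp only [dotProduct, mulVec, vecMulVec_apply]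
  simp only [dotProduct, Finset.mul_sum]
  exact Finset.sum_congr rfl fun i _ => Finset.sum_congr rfl fun j _ => by ring

lemma quad_zero {α β γ t1 t2 t3 : ℝ} (h12 : t1 ≠ t2) (h13 : t1 ≠ t3) (h23 : t2 ≠ t3)
    (e1 : α + β * t1 + γ * t1 ^ 2 = 0) (e2 : α + β * t2 + γ * t2 ^ 2 = 0)
    (e3 : α + β * t3 + γ * t3 ^ 2 = 0) : α = 0 ∧ β = 0 ∧ γ = 0 := by
  have h12' := sub_ne_zero.mpr h12
  have h13' := sub_ne_zero.mpr h13
  have h23' := sub_ne_zero.mpr h23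
  have hγ : γ = 0 := by
    have key : γ * ((t1 - t2) * (t2 - t3) * (t1 - t3)) = 0 := by
      linear_combination (t2 - t3) * e1 - (t1 - t3) * e2 + (t1 - t2) * e3
    rcases mul_eq_zero.mp key with h | h
    · exact h
    · exact absurd h (by positivity)
  have hβ : β = 0 := by
    have key : β * (t1 - t2) = 0 := by
      linear_combination e1 - e2 - (t1 + t2) * (t1 - t2) * hγ
    rcases mul_eq_zero.mp key with h | h
    · exact h
    · exact absurd h h12'
  refine ⟨?_, hβ, hγ⟩
  linear_combination e1 - t1 * hβ - t1 ^ 2 * hγ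

lemma psd_diag_nonneg {X : Mat n} (hX : X.PosSemidef) (i : Fin n) : 0 ≤ X i i := by
  have := hX.dotProduct_mulVec_nonneg (Pi.single i 1)
  simpa [mulVec_single, single_dotProduct] using this

lemma psd_sym {X : Mat n} (hX : X.PosSemidef) (j k : Fin n) : X k j = X j k := by
  have h2 := congrFun (congrFun hX.1 j) k
  simpa [conjTranspose_apply] using h2

lemma psd_row_zero {X : Mat n} (hX : X.PosSemidef) {j : Fin n} (hj : X j j = 0)
    (k : Fin n) : X j k = 0 := by
  rcases eq_or_ne k j with rfl | hkj
  · exact hj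
  by_contra hne
  have key : ∀ t : ℝ, 0 ≤ 2 * t * X j k + X k k := by
    intro t
    set x : Fin n → ℝ := t • (Pi.single j 1 : Fin n → ℝ) + Pi.single k 1 with hx
    have h := hX.dotProduct_mulVec_nonneg x
    have e : star x ⬝ᵥ X *ᵥ x
        = t * X j k + t * X k j + t ^ 2 * X j j + X k k := by
      rw [hx]
      simp [mulVec_add, mulVec_smul, mulVec_single, add_dotProduct, smul_dotProduct,
        single_dotProduct, dotProduct_add, dotProduct_smul, Pi.add_apply, Pi.smul_apply]
      ring
    rw [e, hj, psd_sym hX j k] at h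
    linarith
  have := key (-(X k k + 1) / (2 * X j k))
  have h2 : 2 * (-(X k k + 1) / (2 * X j k)) * X j k = -(X k k + 1) := by
    field_simp
  rw [h2] at this
  linarith


lemma psd_decomp {X : Mat n} (hX : X.PosSemidef) :
    ∃ B : Mat n, X = ∑ k, vecMulVec (B k) (B k) := by
  obtain ⟨B, hB⟩ : ∃ B : Mat n, X = Bᴴ * B := by
    open scoped MatrixOrder in
    obtain ⟨B, hB⟩ := CStarAlgebra.nonneg_iff_eq_star_mul_self.mp hX.nonneg
    exact ⟨B, hB⟩
  refine ⟨B, ?_⟩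
  rw [hB]
  ext i j
  simp [Matrix.mul_apply, Matrix.sum_apply, vecMulVec_apply, conjTranspose_apply]

section Face

variable {F : Set (Mat n)} (hF : IsFace {A : Mat n | A.PosSemidef} F)

include hF

lemma face_zero_mem (hne : F.Nonempty) : (0 : Mat n) ∈ F := by
  obtain ⟨x, hx⟩ := hne
  simpa using hF.2.2.1 x hx 0 le_rfl

lemma face_add_mem {x y : Mat n} (hx : x ∈ F) (hy : y ∈ F) : x + y ∈ F := by
  have h := hF.2.1 hx hy (by norm_num : (0:ℝ) ≤ 1/2) (by norm_num : (0:ℝ) ≤ 1/2) (by norm_num)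
  have h2 := hF.2.2.1 _ h 2 (by norm_num)
  have : (2:ℝ) • ((1/2 : ℝ) • x + (1/2 : ℝ) • y) = x + y := by
    rw [smul_add, smul_smul, smul_smul]
    norm_num
  rwa [this] at h2

lemma face_sum_mem (hne : F.Nonempty) {ι : Type*} (s : Finset ι) (g : ι → Mat n)
    (hg : ∀ i ∈ s, g i ∈ F) : (∑ i ∈ s, g i) ∈ F := by
  classical
  induction s using Finset.induction_on with
  | empty => simpa using face_zero_mem hF hne
  | @insert a s' hx ih =>
    rw [Finset.sum_insert hx]
    exact face_add_mem hF (hg a (Finset.mem_insert_self a s'))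
      (ih fun i hi => hg i (Finset.mem_insert_of_mem hi))

omit hF in
lemma psd_sum {ι : Type*} (s : Finset ι) (g : ι → Mat n)
    (hg : ∀ i ∈ s, (g i).PosSemidef) : (∑ i ∈ s, g i).PosSemidef :=
  Finset.sum_induction g _ (fun _ _ ha hb => ha.add hb) Matrix.PosSemidef.zero hg

lemma face_extract {ι : Type*} (s : Finset ι) (g : ι → Mat n)
    (hg : ∀ i ∈ s, (g i).PosSemidef) (hsum : (∑ i ∈ s, g i) ∈ F) :
    ∀ i ∈ s, g i ∈ F := by
  classical
  induction s using Finset.induction_on with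
  | empty => simp
  | @insert a s' hx ih =>
    rw [Finset.sum_insert hx] at hsum
    have hsplit := hF.2.2.2 (g a) (hg a (by simp)) (∑ i ∈ s', g i)
      (psd_sum s' g fun i hi => hg i (by simp [hi])) hsum
    intro i hi
    rcases Finset.mem_insert.mp hi with rfl | hi'
    · exact hsplit.1
    · exact ih (fun i hi => hg i (by simp [hi])) hsplit.2 i hi'

lemma face_vvT_add (hne : F.Nonempty) {v w : Fin n → ℝ}
    (hv : vecMulVec v v ∈ F) (hw : vecMulVec w w ∈ F) :
    vecMulVec (v + w) (v + w) ∈ F := by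
  have hid : vecMulVec (v + w) (v + w) + vecMulVec (v - w) (v - w)
      = (2:ℝ) • vecMulVec v v + (2:ℝ) • vecMulVec w w := by
    ext i j
    simp [vecMulVec_apply, Matrix.add_apply, Matrix.smul_apply]
    ring
  have hmem : (2:ℝ) • vecMulVec v v + (2:ℝ) • vecMulVec w w ∈ F :=
    face_add_mem hF (hF.2.2.1 _ hv 2 (by norm_num)) (hF.2.2.1 _ hw 2 (by norm_num))
  rw [← hid] at hmem
  exact (hF.2.2.2 _ (vvT_psd (v + w)) _ (vvT_psd (v - w)) hmem).1

/-- The subspace associated to a face of the PSD cone. -/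
def faceV (hne : F.Nonempty) : Submodule ℝ (Fin n → ℝ) where
  carrier := {v | vecMulVec v v ∈ F}
  zero_mem' := by
    have h0 : vecMulVec (0 : Fin n → ℝ) (0 : Fin n → ℝ) = (0 : Mat n) := by
      ext i j; simp [vecMulVec_apply]
    show vecMulVec (0 : Fin n → ℝ) (0 : Fin n → ℝ) ∈ F
    rw [h0]
    exact face_zero_mem hF hne
  add_mem' := fun hv hw => face_vvT_add hF hne hv hw
  smul_mem' := by
    intro c v hv
    have hid : vecMulVec (c • v) (c • v) = (c * c) • vecMulVec v v := by
      ext i j; simp [vecMulVec_apply, Matrix.smul_apply]; ring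
    simp only [Set.mem_setOf_eq] at hv ⊢
    rw [hid]
    exact hF.2.2.1 _ hv (c * c) (mul_self_nonneg c)

lemma mem_faceV_iff (hne : F.Nonempty) (v : Fin n → ℝ) :
    v ∈ faceV hF hne ↔ vecMulVec v v ∈ F := Iff.rfl

end Face

/-- Reconstruction: a face is determined by its subspace. -/
lemma face_subset_of_V_le {F G : Set (Mat n)}
    (hF : IsFace {A : Mat n | A.PosSemidef} F) (hG : IsFace {A : Mat n | A.PosSemidef} G)
    (hneF : F.Nonempty) (hneG : G.Nonempty)
    (hV : faceV hG hneG ≤ faceV hF hneF) : G ⊆ F := by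
  intro X hX
  have hXpsd : X.PosSemidef := hG.1 hX
  obtain ⟨B, hB⟩ := psd_decomp hXpsd
  have hrows : ∀ k : Fin n, vecMulVec (B k) (B k) ∈ G := by
    have := face_extract hG Finset.univ (fun k => vecMulVec (B k) (B k))
      (fun k _ => vvT_psd (B k)) (by rw [← hB]; exact hX)
    exact fun k => this k (Finset.mem_univ k)
  have hrowsF : ∀ k : Fin n, vecMulVec (B k) (B k) ∈ F := fun k => hV (hrows k)
  rw [hB]
  exact face_sum_mem hF hneF Finset.univ _ (fun k _ => hrowsF k)

lemma faceV_lt_of_lt {F G : Set (Mat n)}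
    (hF : IsFace {A : Mat n | A.PosSemidef} F) (hG : IsFace {A : Mat n | A.PosSemidef} G)
    (hneF : F.Nonempty) (hneG : G.Nonempty) (hFG : F ⊂ G) :
    faceV hF hneF < faceV hG hneG := by
  refine lt_of_le_of_ne (fun v hv => hFG.1 hv) ?_
  intro heq
  exact absurd (face_subset_of_V_le hF hG hneF hneG (le_of_eq heq.symm)) hFG.2


/-- The ray generated by `vecMulVec v v` is a polyhedral cone. -/
lemma ray_polyhedral (v : Fin n → ℝ) :
    IsPolyhedralCone {X : Mat n | ∃ c : ℝ, 0 ≤ c ∧ X = c • vecMulVec v v} := by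
  classical
  by_cases hv : v = 0
  · subst hv
    refine ⟨(Finset.univ : Finset (Fin n × Fin n)).image (fun q => entryLM n q.1 q.2) ∪
      (Finset.univ : Finset (Fin n × Fin n)).image (fun q => -entryLM n q.1 q.2), ?_⟩
    ext X
    simp only [Set.mem_setOf_eq]
    constructor
    · rintro ⟨c, hc, rfl⟩ f hf
      have hA : vecMulVec (0 : Fin n → ℝ) (0 : Fin n → ℝ) = (0 : Mat n) := by
        ext i j; simp [vecMulVec_apply]
      rw [hA, smul_zero, map_zero]
    · intro h
      refine ⟨0, le_rfl, ?_⟩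
      ext i j
      have h1 := h (entryLM n i j) (Finset.mem_union_left _
        (Finset.mem_image.mpr ⟨(i, j), Finset.mem_univ _, rfl⟩))
      have h2 := h (-entryLM n i j) (Finset.mem_union_right _
        (Finset.mem_image.mpr ⟨(i, j), Finset.mem_univ _, rfl⟩))
      simp only [entryLM_apply, LinearMap.neg_apply, Left.nonneg_neg_iff] at h1 h2
      simp [vecMulVec_apply]
      linarith
  · obtain ⟨p, hp⟩ : ∃ p, v p ≠ 0 := by
      by_contra h
      push_neg at h
      exact hv (funext h)
    set A : Mat n := vecMulVec v v with hA
    have hApp : 0 < A p p := by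
      rw [hA]
      simpa [vecMulVec_apply] using mul_self_pos.mpr hp
    set g : Fin n × Fin n → (Mat n →ₗ[ℝ] ℝ) :=
      fun q => (A p p) • entryLM n q.1 q.2 - (A q.1 q.2) • entryLM n p p with hg
    refine ⟨insert (entryLM n p p)
      ((Finset.univ : Finset (Fin n × Fin n)).image g ∪
       (Finset.univ : Finset (Fin n × Fin n)).image (fun q => -g q)), ?_⟩
    ext X
    simp only [Set.mem_setOf_eq]
    constructor
    · rintro ⟨c, hc, rfl⟩ f hf
      rcases Finset.mem_insert.mp hf with rfl | hf'
      · simp only [entryLM_apply, Matrix.smul_apply, smul_eq_mul]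
        exact mul_nonneg hc hApp.le
      · have e : ∀ q : Fin n × Fin n, g q (c • A) = 0 := by
          intro q
          simp only [hg, LinearMap.sub_apply, LinearMap.smul_apply, entryLM_apply,
            Matrix.smul_apply, smul_eq_mul]
          ring
        rcases Finset.mem_union.mp hf' with h | h <;>
          obtain ⟨q, _, rfl⟩ := Finset.mem_image.mp h
        · rw [e q]
        · rw [LinearMap.neg_apply, e q, neg_zero]
    · intro h
      have h0 : 0 ≤ X p p := by
        simpa using h (entryLM n p p) (Finset.mem_insert_self _ _)
      have hentry : ∀ i j, A p p * X i j = A i j * X p p := by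
        intro i j
        have h1 := h (g (i, j)) (Finset.mem_insert_of_mem (Finset.mem_union_left _
          (Finset.mem_image.mpr ⟨(i, j), Finset.mem_univ _, rfl⟩)))
        have h2 := h (-g (i, j)) (Finset.mem_insert_of_mem (Finset.mem_union_right _
          (Finset.mem_image.mpr ⟨(i, j), Finset.mem_univ _, rfl⟩)))
        simp only [hg, LinearMap.sub_apply, LinearMap.smul_apply, LinearMap.neg_apply,
          entryLM_apply, smul_eq_mul, Left.nonneg_neg_iff] at h1 h2
        linarith
      refine ⟨X p p / A p p, div_nonneg h0 hApp.le, ?_⟩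
      ext i j
      have := hentry i j
      simp only [Matrix.smul_apply, smul_eq_mul]
      field_simp
      linarith [hentry i j]


lemma face_polyhedral_of_finrank_le_one {F : Set (Mat n)}
    (hF : IsFace {A : Mat n | A.PosSemidef} F) (hne : F.Nonempty)
    (hd : Module.finrank ℝ (faceV hF hne) ≤ 1) : IsPolyhedralCone F := by
  have hprin : (faceV hF hne).IsPrincipal :=
    (Submodule.finrank_le_one_iff_isPrincipal _).mp hd
  obtain ⟨v, hv⟩ := hprin.principal
  have hray : F = {X : Mat n | ∃ c : ℝ, 0 ≤ c ∧ X = c • vecMulVec v v} := by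
    ext X
    constructor
    · intro hX
      have hXpsd : X.PosSemidef := hF.1 hX
      obtain ⟨B, hB⟩ := psd_decomp hXpsd
      have hrows : ∀ k : Fin n, vecMulVec (B k) (B k) ∈ F := by
        have := face_extract hF Finset.univ (fun k => vecMulVec (B k) (B k))
          (fun k _ => vvT_psd (B k)) (by rw [← hB]; exact hX)
        exact fun k => this k (Finset.mem_univ k)
      have hcoef : ∀ k : Fin n, ∃ c : ℝ, B k = c • v := by
        intro k
        have : B k ∈ faceV hF hne := hrows k
        rw [hv, Submodule.mem_span_singleton] at this
        obtain ⟨a, ha⟩ := this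
        exact ⟨a, ha.symm⟩
      choose c hc using hcoef
      refine ⟨∑ k, c k * c k, Finset.sum_nonneg fun k _ => mul_self_nonneg _, ?_⟩
      rw [hB, Finset.sum_smul]
      apply Finset.sum_congr rfl
      intro k _
      rw [hc k]
      ext i j
      simp [vecMulVec_apply, Matrix.smul_apply]
      ring
    · rintro ⟨c, hc, rfl⟩
      have hvV : v ∈ faceV hF hne := by
        rw [hv]
        exact Submodule.mem_span_singleton_self v
      exact hF.2.2.1 _ hvV c hc
  rw [hray]
  exact ray_polyhedral v


section NonPoly

variable {a b : Fin n}

/-- From failure of membership for every small ε, extract a functional vanishing on `X`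
and positive on `Y`. -/
lemma exists_functional (s : Finset (Mat n →ₗ[ℝ] ℝ)) (X Y : Mat n)
    (hX : ∀ f ∈ s, 0 ≤ f X)
    (hfail : ∀ k : ℕ, ∃ f ∈ s, f X - (1 / (k + 1 : ℝ)) * f Y < 0) :
    ∃ f ∈ s, f X = 0 ∧ 0 < f Y := by
  classical
  choose g hg1 hg2 using hfail
  have hsne : s.Nonempty := ⟨g 0, hg1 0⟩
  haveI : Nonempty {f // f ∈ s} := ⟨⟨g 0, hg1 0⟩⟩
  obtain ⟨⟨f, hfs⟩, hfib⟩ := Finite.exists_infinite_fiber (fun k => (⟨g k, hg1 k⟩ : {f // f ∈ s}))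
  rw [Set.infinite_coe_iff] at hfib
  set T : Set ℕ := (fun k => (⟨g k, hg1 k⟩ : {f // f ∈ s})) ⁻¹' {⟨f, hfs⟩} with hT
  have hTf : ∀ k ∈ T, g k = f := by
    intro k hk
    have : (⟨g k, hg1 k⟩ : {f // f ∈ s}) = ⟨f, hfs⟩ := hk
    exact congrArg Subtype.val this
  obtain ⟨k0, hk0⟩ : T.Nonempty := hfib.nonempty
  have hfX : 0 ≤ f X := hX f hfs
  have hfY : 0 < f Y := by
    have h := hg2 k0
    rw [hTf k0 hk0] at h
    by_contra hY
    push_neg at hY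
    have : (0:ℝ) < 1 / (k0 + 1 : ℝ) := by positivity
    nlinarith
  refine ⟨f, hfs, ?_, hfY⟩
  by_contra hXne
  have hfXpos : 0 < f X := lt_of_le_of_ne hfX (Ne.symm hXne)
  obtain ⟨m, hm⟩ := exists_nat_gt (f Y / f X)
  obtain ⟨k, hkT, hkm⟩ := hfib.exists_gt m
  have h := hg2 k
  rw [hTf k hkT] at h
  have hk1 : (f Y / f X) < (k + 1 : ℝ) := by
    have : (m:ℝ) < (k:ℝ) + 1 := by
      have : (m:ℝ) ≤ (k:ℝ) := Nat.cast_le.mpr hkm.le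
      linarith
    linarith
  have hfYk : f Y < (k + 1 : ℝ) * f X := by
    rwa [div_lt_iff₀ hfXpos] at hk1
  have hpos : (0:ℝ) < (k:ℝ) + 1 := by positivity
  rw [sub_neg] at h
  rw [div_mul_eq_mul_div, lt_div_iff₀ hpos, one_mul] at h
  nlinarith


lemma not_polyhedral_of_line (F : Set (Mat n)) (hFK : ∀ X ∈ F, Matrix.PosSemidef X)
    (hab : a ≠ b)
    (hmem : ∀ t : ℝ, vecMulVec ((Pi.single a 1 : Fin n → ℝ) + t • (Pi.single b 1 : Fin n → ℝ))
      ((Pi.single a 1 : Fin n → ℝ) + t • (Pi.single b 1 : Fin n → ℝ)) ∈ F) :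
    ¬ IsPolyhedralCone F := by
  classical
  rintro ⟨s, hs⟩
  set sa : Fin n → ℝ := Pi.single a 1 with hsa
  set sb : Fin n → ℝ := Pi.single b 1 with hsb
  set u : ℝ → (Fin n → ℝ) := fun t => sa + t • sb with hu
  set w : ℝ → (Fin n → ℝ) := fun t => (-t) • sa + sb with hw
  set X : ℝ → Mat n := fun t => vecMulVec (u t) (u t) with hX
  set Y : ℝ → Mat n := fun t => vecMulVec (w t) (w t) with hY
  have hba : b ≠ a := hab.symm
  have huw : ∀ t : ℝ, (u t) ⬝ᵥ (w t) = 0 := by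
    intro t
    simp [hu, hw, hsa, hsb, add_dotProduct, smul_dotProduct, dotProduct_add, dotProduct_smul,
      single_dotProduct, dotProduct_single, Pi.single_apply, hab, hba]
  have hww : ∀ t : ℝ, (w t) ⬝ᵥ (w t) = t ^ 2 + 1 := by
    intro t
    simp [hw, hsa, hsb, add_dotProduct, smul_dotProduct, dotProduct_add, dotProduct_smul,
      single_dotProduct, dotProduct_single, Pi.single_apply, hab, hba]
    ring
  -- the perturbed matrix is not PSD, hence not in F
  have hXY : ∀ t ε : ℝ, 0 < ε → X t - ε • Y t ∉ F := by
    intro t ε hε hmemF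
    have hpsd := hFK _ hmemF
    have hq := hpsd.dotProduct_mulVec_nonneg (w t)
    have he : star (w t) ⬝ᵥ (X t - ε • Y t) *ᵥ (w t) = - (ε * (t ^ 2 + 1) ^ 2) := by
      rw [star_trivial, sub_mulVec, dotProduct_sub, smul_mulVec, dotProduct_smul]
      rw [hX, hY]
      simp only [vvT_quadform, huw t, hww t, smul_eq_mul]
      ring
    rw [he] at hq
    have hpos : (0:ℝ) < (t ^ 2 + 1) ^ 2 := by positivity
    nlinarith
  -- for each t, a functional vanishing on X t and positive on Y t
  have hstep : ∀ t : ℝ, ∃ f ∈ s, f (X t) = 0 ∧ 0 < f (Y t) := by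
    intro t
    apply exists_functional s (X t) (Y t)
    · intro f hf
      have : X t ∈ F := hmem t
      rw [hs] at this
      exact this f hf
    · intro k
      have hk : (0:ℝ) < 1 / (k + 1 : ℝ) := by positivity
      have := hXY t (1 / (k + 1 : ℝ)) hk
      rw [hs] at this
      simp only [Set.mem_setOf_eq, not_forall] at this
      obtain ⟨f, hf, hneg⟩ := this
      push_neg at hneg
      refine ⟨f, hf, ?_⟩
      rw [map_sub, LinearMap.map_smul, smul_eq_mul] at hneg
      linarith
  choose g hg1 hg2 hg3 using fun m : ℕ => hstep (m : ℝ)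
  haveI : Nonempty {f // f ∈ s} := ⟨⟨g 0, hg1 0⟩⟩
  obtain ⟨⟨f, hfs⟩, hfib⟩ := Finite.exists_infinite_fiber (fun m => (⟨g m, hg1 m⟩ : {f // f ∈ s}))
  rw [Set.infinite_coe_iff] at hfib
  have hTf : ∀ m, (⟨g m, hg1 m⟩ : {f // f ∈ s}) = ⟨f, hfs⟩ → g m = f :=
    fun m h => congrArg Subtype.val h
  obtain ⟨m1, hm1⟩ := hfib.nonempty
  obtain ⟨m2, hm2T, hm2⟩ := hfib.exists_gt m1
  obtain ⟨m3, hm3T, hm3⟩ := hfib.exists_gt m2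
  have hf1 := hTf m1 hm1
  have hf2 := hTf m2 hm2T
  have hf3 := hTf m3 hm3T
  -- matrix identities
  set A0 : Mat n := vecMulVec sa sa with hA0
  set B0 : Mat n := vecMulVec sa sb + vecMulVec sb sa with hB0
  set C0 : Mat n := vecMulVec sb sb with hC0
  have hXid : ∀ t : ℝ, X t = A0 + t • B0 + (t ^ 2) • C0 := by
    intro t
    rw [hX, hA0, hB0, hC0]
    ext i j
    simp only [vecMulVec_apply, Matrix.add_apply, Matrix.smul_apply, hu, Pi.add_apply,
      Pi.smul_apply, smul_eq_mul]
    ring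
  have hYid : ∀ t : ℝ, Y t = (t ^ 2) • A0 - t • B0 + C0 := by
    intro t
    rw [hY, hA0, hB0, hC0]
    ext i j
    simp only [vecMulVec_apply, Matrix.add_apply, Matrix.sub_apply, Matrix.smul_apply, hw,
      Pi.add_apply, Pi.smul_apply, smul_eq_mul]
    ring
  have hfX : ∀ t : ℝ, f (X t) = f A0 + f B0 * t + f C0 * t ^ 2 := by
    intro t
    rw [hXid t, map_add, map_add, LinearMap.map_smul, LinearMap.map_smul, smul_eq_mul, smul_eq_mul]
    ring
  have hfY : ∀ t : ℝ, f (Y t) = f C0 + (- f B0) * t + f A0 * t ^ 2 := by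
    intro t
    rw [hYid t, map_add, map_sub, LinearMap.map_smul, LinearMap.map_smul, smul_eq_mul, smul_eq_mul]
    ring
  have hc12 : (m1 : ℝ) ≠ (m2 : ℝ) := by exact_mod_cast hm2.ne
  have hc23 : (m2 : ℝ) ≠ (m3 : ℝ) := by exact_mod_cast hm3.ne
  have hc13 : (m1 : ℝ) ≠ (m3 : ℝ) := by exact_mod_cast (hm2.trans hm3).ne
  have e1 : f A0 + f B0 * (m1:ℝ) + f C0 * (m1:ℝ) ^ 2 = 0 := by
    rw [← hfX]; rw [← hf1]; exact hg2 m1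
  have e2 : f A0 + f B0 * (m2:ℝ) + f C0 * (m2:ℝ) ^ 2 = 0 := by
    rw [← hfX]; rw [← hf2]; exact hg2 m2
  have e3 : f A0 + f B0 * (m3:ℝ) + f C0 * (m3:ℝ) ^ 2 = 0 := by
    rw [← hfX]; rw [← hf3]; exact hg2 m3
  obtain ⟨hA, hB, hC⟩ := quad_zero hc12 hc13 hc23 e1 e2 e3
  have hY1 : 0 < f (Y (m1:ℝ)) := by rw [← hf1]; exact hg3 m1
  rw [hfY, hA, hB, hC] at hY1
  simp at hY1

end NonPoly

section Chain

variable (hn : 1 ≤ n)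

/-- The `i`-th face of the explicit chain: PSD matrices supported on the top-left
`(i+1) × (i+1)` block. -/
def chainFace (i : Fin n) : Set (Mat n) :=
  {X : Mat n | X.PosSemidef ∧ ∀ j k : Fin n, (i.val < j.val ∨ i.val < k.val) → X j k = 0}

lemma chainFace_isFace (i : Fin n) :
    IsFace {A : Mat n | A.PosSemidef} (chainFace i) := by
  refine ⟨fun X hX => hX.1, ?_, ?_, ?_⟩
  · -- convex
    rintro X ⟨hX, hXz⟩ Y ⟨hY, hYz⟩ p q hp hq hpq
    refine ⟨(psd_smul hX hp).add (psd_smul hY hq), ?_⟩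
    intro j k hjk
    simp [Matrix.add_apply, Matrix.smul_apply, hXz j k hjk, hYz j k hjk]
  · -- cone
    rintro X ⟨hX, hXz⟩ t ht
    refine ⟨psd_smul hX ht, ?_⟩
    intro j k hjk
    simp [Matrix.smul_apply, hXz j k hjk]
  · -- face property
    rintro X hX Y hY ⟨hXY, hz⟩
    have hXpsd : X.PosSemidef := hX
    have hYpsd : Y.PosSemidef := hY
    have hdiag : ∀ j : Fin n, i.val < j.val → X j j = 0 ∧ Y j j = 0 := by
      intro j hj
      have h0 := hz j j (Or.inl hj)
      have h1 := psd_diag_nonneg hXpsd j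
      have h2 := psd_diag_nonneg hYpsd j
      rw [Matrix.add_apply] at h0
      constructor <;> linarith
    have key : ∀ (Z : Mat n), Z.PosSemidef → (∀ j : Fin n, i.val < j.val → Z j j = 0) →
        ∀ j k : Fin n, (i.val < j.val ∨ i.val < k.val) → Z j k = 0 := by
      intro Z hZ hZd j k hjk
      rcases hjk with hj | hk
      · exact psd_row_zero hZ (hZd j hj) k
      · rw [psd_sym hZ k j]
        exact psd_row_zero hZ (hZd k hk) j
    exact ⟨⟨hXpsd, key X hXpsd (fun j hj => (hdiag j hj).1)⟩,
      ⟨hYpsd, key Y hYpsd (fun j hj => (hdiag j hj).2)⟩⟩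

lemma chainFace_nonempty (i : Fin n) : (chainFace i).Nonempty :=
  ⟨0, Matrix.PosSemidef.zero, fun j k _ => rfl⟩

lemma chainFace_strictMono : StrictMono (chainFace (n := n)) := by
  intro i j hij
  have hsub : chainFace i ⊆ chainFace j := by
    rintro X ⟨hX, hz⟩
    refine ⟨hX, fun p q hpq => hz p q ?_⟩
    rcases hpq with h | h
    · exact Or.inl (lt_of_le_of_lt (le_of_lt hij) h)
    · exact Or.inr (lt_of_le_of_lt (le_of_lt hij) h)
  have hm : i.val + 1 < n := lt_of_le_of_lt (Nat.succ_le_of_lt hij) j.isLt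
  set m : Fin n := ⟨i.val + 1, hm⟩ with hmdef
  set D : Mat n := vecMulVec (Pi.single m 1) (Pi.single m 1) with hD
  have hDj : D ∈ chainFace j := by
    refine ⟨vvT_psd _, ?_⟩
    intro p q hpq
    rw [hD]
    simp only [vecMulVec_apply, Pi.single_apply]
    rcases hpq with h | h
    · have hpm : p ≠ m := by
        intro hpe
        rw [hpe] at h
        exact absurd (Nat.succ_le_of_lt hij) (not_le.mpr h)
      simp [hpm]
    · have hqm : q ≠ m := by
        intro hqe
        rw [hqe] at h
        exact absurd (Nat.succ_le_of_lt hij) (not_le.mpr h)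
      simp [hqm]
  have hDi : D ∉ chainFace i := by
    rintro ⟨-, hz⟩
    have := hz m m (Or.inl (by simp [hmdef]))
    rw [hD] at this
    simp [vecMulVec_apply, Pi.single_apply] at this
  exact lt_of_le_of_ne hsub (fun h => hDi (h ▸ hDj))

lemma chainFace_zero_poly (i : Fin n) (hi : i.val = 0) :
    IsPolyhedralCone (chainFace i) := by
  have ha : (0:ℕ) < n := i.pos
  set a0 : Fin n := ⟨0, ha⟩ with ha0
  have heq : chainFace i = {X : Mat n | ∃ c : ℝ, 0 ≤ c ∧
      X = c • vecMulVec (Pi.single a0 1) (Pi.single a0 1)} := by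
    ext X
    constructor
    · rintro ⟨hX, hz⟩
      refine ⟨X a0 a0, psd_diag_nonneg hX a0, ?_⟩
      ext p q
      simp only [Matrix.smul_apply, vecMulVec_apply, Pi.single_apply, smul_eq_mul]
      by_cases hp : p = a0 <;> by_cases hq : q = a0
      · subst hp; subst hq; simp
      · have hq0 : q.val ≠ 0 := fun h0 => hq (Fin.ext (by simp [ha0, h0]))
        have : X p q = 0 := hz p q (Or.inr (by omega))
        simp [this, hq]
      · have hp0 : p.val ≠ 0 := fun h0 => hp (Fin.ext (by simp [ha0, h0]))
        have : X p q = 0 := hz p q (Or.inl (by omega))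
        simp [this, hp]
      · have hp0 : p.val ≠ 0 := fun h0 => hp (Fin.ext (by simp [ha0, h0]))
        have : X p q = 0 := hz p q (Or.inl (by omega))
        simp [this, hp]
    · rintro ⟨c, hc, rfl⟩
      refine ⟨psd_smul (vvT_psd _) hc, ?_⟩
      intro p q hpq
      simp only [Matrix.smul_apply, vecMulVec_apply, Pi.single_apply, smul_eq_mul]
      rcases hpq with h | h
      · have hpm : p ≠ a0 := fun hpe => by rw [hpe, ha0] at h; simp [hi] at h
        simp [hpm]
      · have hqm : q ≠ a0 := fun hqe => by rw [hqe, ha0] at h; simp [hi] at h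
        simp [hqm]
  rw [heq]
  exact ray_polyhedral _

lemma chainFace_pos_not_poly (i : Fin n) (hi : 0 < i.val) :
    ¬ IsPolyhedralCone (chainFace i) := by
  have h1 : 1 < n := lt_of_le_of_lt (Nat.succ_le_of_lt hi) i.isLt
  set a0 : Fin n := ⟨0, by omega⟩ with ha0
  set b0 : Fin n := ⟨1, h1⟩ with hb0
  have hab : a0 ≠ b0 := by
    simp [ha0, hb0, Fin.ext_iff]
  apply not_polyhedral_of_line (chainFace i) (fun X hX => hX.1) hab
  intro t
  refine ⟨vvT_psd _, ?_⟩
  intro p q hpq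
  simp only [vecMulVec_apply, Pi.add_apply, Pi.smul_apply, Pi.single_apply, smul_eq_mul]
  have hzero : ∀ r : Fin n, i.val < r.val →
      (if r = a0 then (1:ℝ) else 0) + t * (if r = b0 then 1 else 0) = 0 := by
    intro r hr
    have hra : r ≠ a0 := fun h => by rw [h] at hr; simp [ha0] at hr
    have hrb : r ≠ b0 := fun h => by rw [h] at hr; simp [hb0] at hr; omega
    simp [hra, hrb]
  rcases hpq with h | h
  · rw [hzero p h]; ring
  · rw [hzero q h]; ring

end Chain

end Stmt12Aux

/-- The distance to polyhedrality of the positive semidefinite cone `S^n_+` is `n − 1`: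
the longest strictly ascending chain of nonempty faces starting with a polyhedral face
followed only by nonpolyhedral faces has length `n`. -/
theorem stmt12 {n : ℕ} (hn : 1 ≤ n) :
    (∃ F : Fin n → Set (Matrix (Fin n) (Fin n) ℝ),
        IsPolyChain {A | A.PosSemidef} n F) ∧
      ∀ ℓ (F : Fin ℓ → Set (Matrix (Fin n) (Fin n) ℝ)),
        IsPolyChain {A | A.PosSemidef} ℓ F → ℓ ≤ n := by
  constructor
  · exact ⟨Stmt12Aux.chainFace,
      ⟨⟨Stmt12Aux.chainFace_strictMono,
        fun i => ⟨Stmt12Aux.chainFace_isFace i, Stmt12Aux.chainFace_nonempty i⟩⟩,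
       fun i hi => Stmt12Aux.chainFace_zero_poly i hi,
       fun i hi => Stmt12Aux.chainFace_pos_not_poly i hi⟩⟩
  · intro ℓ F hPC
    obtain ⟨⟨hmono, hfaces⟩, _, hpoly⟩ := hPC
    set d : Fin ℓ → ℕ :=
      fun i => Module.finrank ℝ (Stmt12Aux.faceV (hfaces i).1 (hfaces i).2) with hd
    have hd_mono : StrictMono d := by
      intro i j hij
      exact Submodule.finrank_lt_finrank_of_lt
        (Stmt12Aux.faceV_lt_of_lt (hfaces i).1 (hfaces j).1 (hfaces i).2 (hfaces j).2
          (hmono hij))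
    have hd2 : ∀ i : Fin ℓ, 0 < i.val → 2 ≤ d i := by
      intro i hi
      by_contra hlt
      push_neg at hlt
      exact hpoly i hi (Stmt12Aux.face_polyhedral_of_finrank_le_one (hfaces i).1 (hfaces i).2
        (by change d i ≤ 1; omega))
    have hdn : ∀ i : Fin ℓ, d i ≤ n := by
      intro i
      have h1 := Submodule.finrank_le (Stmt12Aux.faceV (hfaces i).1 (hfaces i).2)
      rwa [Module.finrank_fin_fun ℝ] at h1
    by_cases hl : ℓ ≤ 1
    · omega
    push_neg at hl
    have claim : ∀ m : ℕ, 1 ≤ m → ∀ hm : m < ℓ, m + 1 ≤ d ⟨m, hm⟩ := by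
      intro m hm1
      induction m, hm1 using Nat.le_induction with
      | base => intro hm; exact hd2 ⟨1, hm⟩ (by simp)
      | succ m hm ih =>
        intro hlt
        have hmlt : m < ℓ := by omega
        have hstep := hd_mono (show (⟨m, hmlt⟩ : Fin ℓ) < ⟨m + 1, hlt⟩ by
          simp [Fin.lt_def])
        have := ih hmlt
        omega
    have h1 := claim (ℓ - 1) (by omega) (by omega)
    have h2 := hdn ⟨ℓ - 1, by omega⟩
    omega
end

section
/- The longest strictly ascending chain of nonempty faces of the doubly nonnegative cone D^n = S^n_+ ∩ N^n (positive semidefinite matrices with nonnegative entries) has length n(n+1)/2 + 1, which is the maximum possible for any closed convex cone contained in the space S^n of n×n symmetric matrices. -/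
/-- The doubly nonnegative cone `D^n = S^n_+ ∩ N^n`. -/
def DoublyNonnegative (n : ℕ) : Set (Matrix (Fin n) (Fin n) ℝ) :=
  {A | A.PosSemidef} ∩ {A | ∀ i j, 0 ≤ A i j}

def triN (j : ℕ) : ℕ := j * (j + 1) / 2

lemma triN_succ (j : ℕ) : triN (j + 1) = triN j + (j + 1) := by
  obtain ⟨c, hc⟩ := Nat.even_mul_succ_self j
  have h2 : (j + 1) * (j + 1 + 1) = j * (j + 1) + 2 * (j + 1) := by ring
  unfold triN
  omega

lemma triN_mono : StrictMono triN :=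
  strictMono_nat_of_lt_succ (fun j => by rw [triN_succ]; omega)

/-- position index of the upper-triangular entry `(i,j)`, `i ≤ j`. -/
def kap (i j : ℕ) : ℕ := triN j + (if i = j then 0 else i + 1)

lemma kap_lt {i j n : ℕ} (hij : i ≤ j) (hj : j < n) : kap i j < triN n := by
  have h1 : kap i j < triN (j + 1) := by
    rw [triN_succ]; unfold kap; split <;> omega
  exact lt_of_lt_of_le h1 (triN_mono.le_iff_le.mpr hj)

lemma kap_bounds {i j : ℕ} (hij : i ≤ j) : triN j ≤ kap i j ∧ kap i j < triN (j+1) := by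
  rw [triN_succ]; unfold kap; split <;> omega

lemma kap_inj {i j i' j' : ℕ} (h : i ≤ j) (h' : i' ≤ j') (he : kap i j = kap i' j') :
    i = i' ∧ j = j' := by
  have hb := kap_bounds h
  have hb' := kap_bounds h'
  have hjj : j = j' := by
    by_contra hne
    rcases Nat.lt_or_ge j j' with hlt | hge
    · have := triN_mono.le_iff_le.mpr (show j + 1 ≤ j' from hlt)
      omega
    · have hlt : j' < j := by omega
      have := triN_mono.le_iff_le.mpr (show j' + 1 ≤ j from hlt)
      omega
  subst hjj
  unfold kap at he
  constructor
  · split at he <;> split at he <;> omega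
  · rfl

lemma kap_surj {m n : ℕ} (hm : m < triN n) : ∃ i j, i ≤ j ∧ j < n ∧ kap i j = m := by
  set P : ℕ → Prop := fun j => triN j ≤ m with hP
  have hP0 : P 0 := by simp [hP, triN]
  set j := Nat.findGreatest P m with hj
  have hPj : P j := Nat.findGreatest_spec (Nat.zero_le m) hP0
  have hnot : ¬ P (j + 1) := by
    by_cases hle : j + 1 ≤ m
    · exact Nat.findGreatest_is_greatest (by omega) hle
    · -- j = m (since j ≤ m), so triN (j+1) ≥ j+1 > m
      have hjm : j ≤ m := Nat.findGreatest_le m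
      have hj1 : triN (j + 1) ≥ j + 1 := by
        have := triN_mono.le_iff_le.mpr (show 1 ≤ j + 1 by omega)
        have h1 : triN 1 = 1 := by simp [triN]
        have h2 : (j:ℕ) ≤ triN j := by
          clear * -
          induction j with
          | zero => simp [triN]
          | succ k ih => rw [triN_succ]; omega
        rw [triN_succ]; omega
      intro hcon; simp only [hP] at hcon; omega
  simp only [hP] at hPj hnot
  rw [triN_succ] at hnot
  have hjn : j < n := by
    by_contra hge
    have := triN_mono.le_iff_le.mpr (show n ≤ j by omega)
    omega
  set r := m - triN j with hr
  rcases Nat.eq_zero_or_pos r with h0 | hpos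
  · exact ⟨j, j, le_refl j, hjn, by unfold kap; rw [if_pos rfl]; omega⟩
  · refine ⟨r - 1, j, by omega, hjn, ?_⟩
    unfold kap
    have : ¬ (r - 1 = j) := by omega
    rw [if_neg this]; omega

lemma kap_diag_lt {i j : ℕ} (h : i < j) : kap i i < kap i j ∧ kap j j < kap i j := by
  have h1 := kap_bounds (le_refl i)
  have h2 := (kap_bounds (le_of_lt h)).1
  have h3 := triN_mono.le_iff_le.mpr (show i + 1 ≤ j from h)
  constructor
  · omega
  · unfold kap; rw [if_neg (Nat.ne_of_lt h), if_pos rfl]; omega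

open Matrix in
lemma DNN.smul {n : ℕ} {A : Matrix (Fin n) (Fin n) ℝ} (hA : A ∈ DoublyNonnegative n)
    {t : ℝ} (ht : 0 ≤ t) : t • A ∈ DoublyNonnegative n := by
  obtain ⟨hP, hN⟩ := hA
  obtain ⟨hH, hQ⟩ := Matrix.posSemidef_iff_dotProduct_mulVec.mp hP
  refine ⟨Matrix.posSemidef_iff_dotProduct_mulVec.mpr ⟨?_, fun x => ?_⟩, fun i j => ?_⟩
  · unfold Matrix.IsHermitian at hH ⊢
    rw [conjTranspose_smul, hH]
    simp
  · rw [smul_mulVec, dotProduct_smul]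
    exact mul_nonneg ht (hQ x)
  · have := hN i j
    simp only [Matrix.smul_apply, smul_eq_mul]
    exact mul_nonneg ht this

lemma DNN.add {n : ℕ} {A B : Matrix (Fin n) (Fin n) ℝ} (hA : A ∈ DoublyNonnegative n)
    (hB : B ∈ DoublyNonnegative n) : A + B ∈ DoublyNonnegative n := by
  refine ⟨hA.1.add hB.1, fun i j => ?_⟩
  exact add_nonneg (hA.2 i j) (hB.2 i j)

/-- The candidate faces: doubly nonnegative matrices supported on the first `k`
upper-triangular positions in the `kap` ordering. -/
def Fch (n k : ℕ) : Set (Matrix (Fin n) (Fin n) ℝ) :=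
  {A | A ∈ DoublyNonnegative n ∧
    ∀ i j : Fin n, (i : ℕ) ≤ (j : ℕ) → k ≤ kap i j → A i j = 0}

lemma Fch_isFace (n k : ℕ) : IsFace (DoublyNonnegative n) (Fch n k) := by
  refine ⟨fun A hA => hA.1, ?_, ?_, ?_⟩
  · -- convex
    rintro A ⟨hA, hA0⟩ B ⟨hB, hB0⟩ a b ha hb hab
    refine ⟨DNN.add (DNN.smul hA ha) (DNN.smul hB hb), fun i j hij hk => ?_⟩
    simp [hA0 i j hij hk, hB0 i j hij hk]
  · rintro A ⟨hA, hA0⟩ t ht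
    exact ⟨DNN.smul hA ht, fun i j hij hk => by simp [hA0 i j hij hk]⟩
  · rintro A hA B hB ⟨hAB, hAB0⟩
    have key : ∀ i j : Fin n, (i : ℕ) ≤ (j : ℕ) → k ≤ kap i j → A i j = 0 ∧ B i j = 0 := by
      intro i j hij hk
      have h0 := hAB0 i j hij hk
      have h1 := hA.2 i j
      have h2 := hB.2 i j
      have : A i j + B i j = 0 := h0
      constructor <;> linarith
    exact ⟨⟨hA, fun i j hij hk => (key i j hij hk).1⟩,
           ⟨hB, fun i j hij hk => (key i j hij hk).2⟩⟩

lemma Fch_nonempty (n k : ℕ) : (Fch n k).Nonempty :=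
  ⟨0, ⟨Matrix.PosSemidef.zero, fun _ _ => le_refl 0⟩, fun _ _ _ _ => rfl⟩

lemma Fch_mono {n k l : ℕ} (h : k ≤ l) : Fch n k ⊆ Fch n l := by
  rintro A ⟨hA, hA0⟩
  exact ⟨hA, fun i j hij hk => hA0 i j hij (le_trans h hk)⟩

open Matrix in
/-- the witness matrix with support `{i,j} × {i,j}`. -/
lemma witness {n : ℕ} {i j : Fin n} (hij : (i : ℕ) ≤ (j : ℕ)) {k : ℕ} (hk : kap i j < k) :
    ∃ W, W ∈ Fch n k ∧ W i j ≠ 0 := by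
  classical
  set u : Fin n → ℝ := fun a => if a = i ∨ a = j then 1 else 0 with hu
  set W : Matrix (Fin n) (Fin n) ℝ := Matrix.of (fun a b => u a * u b) with hW
  have hWab : ∀ a b, W a b = u a * u b := fun a b => rfl
  have hu_nonneg : ∀ a, 0 ≤ u a := by intro a; rw [hu]; dsimp; split <;> norm_num
  refine ⟨W, ⟨⟨Matrix.posSemidef_iff_dotProduct_mulVec.mpr ⟨?_, fun x => ?_⟩, fun a b => ?_⟩, ?_⟩, ?_⟩
  · -- Hermitian
    unfold Matrix.IsHermitian
    ext a b
    simp [hWab, mul_comm]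
  · -- quadratic form
    have : dotProduct (star x) (W *ᵥ x) = (∑ a, x a * u a) * (∑ b, u b * x b) := by
      rw [Finset.sum_mul_sum]
      unfold dotProduct Matrix.mulVec
      simp only [star_trivial, hWab]
      congr 1; ext a
      unfold dotProduct
      rw [Finset.mul_sum]
      congr 1; ext b
      ring
    rw [this]
    have : (∑ a, x a * u a) = (∑ b, u b * x b) := by congr 1; ext a; ring
    rw [this]
    exact mul_self_nonneg _
  · exact mul_nonneg (hu_nonneg a) (hu_nonneg b)
  · -- support condition
    intro a b hab hkab
    rw [hWab]
    by_contra hne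
    have ha : a = i ∨ a = j := by
      by_contra h; exact hne (by rw [hu]; simp [h])
    have hb : b = i ∨ b = j := by
      by_contra h; exact hne (by rw [hu]; simp [h])
    -- (a,b) with a ≤ b among {i,j}: kap a b ≤ kap i j < k
    have hkey : kap a b ≤ kap i j := by
      rcases Nat.lt_or_ge (i : ℕ) (j : ℕ) with hlt | hge
      · have hd := kap_diag_lt hlt
        rcases ha with rfl | rfl <;> rcases hb with rfl | rfl
        · omega
        · omega
        · -- a = j, b = i, a ≤ b forces contradiction
          omega
        · omega
      · have : (i : ℕ) = (j : ℕ) := le_antisymm hij hge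
        have hij' : i = j := Fin.ext this
        subst hij'
        rcases ha with rfl | rfl <;> rcases hb with rfl | rfl <;> omega
    omega
  · -- W i j = 1
    rw [hWab, hu]
    simp

/-! ### Upper bound machinery -/

section Upper

variable {n : ℕ}

lemma face_zero_mem {C F : Set (Matrix (Fin n) (Fin n) ℝ)}
    (hF : IsFace C F) (hne : F.Nonempty) : (0 : Matrix (Fin n) (Fin n) ℝ) ∈ F := by
  obtain ⟨w, hw⟩ := hne
  have := hF.2.2.1 w hw 0 le_rfl
  simpa using this

lemma face_add_mem {C F : Set (Matrix (Fin n) (Fin n) ℝ)}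
    (hF : IsFace C F) {x y : Matrix (Fin n) (Fin n) ℝ} (hx : x ∈ F) (hy : y ∈ F) :
    x + y ∈ F := by
  have hmid : (1/2 : ℝ) • x + (1/2 : ℝ) • y ∈ F :=
    hF.2.1 hx hy (by norm_num) (by norm_num) (by norm_num)
  have := hF.2.2.1 _ hmid 2 (by norm_num)
  have heq : (2 : ℝ) • ((1/2 : ℝ) • x + (1/2 : ℝ) • y) = x + y := by
    rw [smul_add, smul_smul, smul_smul]; norm_num
  rwa [heq] at this

lemma span_face_sub {C F : Set (Matrix (Fin n) (Fin n) ℝ)}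
    (hF : IsFace C F) (hne : F.Nonempty) {x : Matrix (Fin n) (Fin n) ℝ}
    (hx : x ∈ Submodule.span ℝ F) : ∃ u ∈ F, ∃ v ∈ F, x = u - v := by
  induction hx using Submodule.span_induction with
  | mem z hz => exact ⟨z, hz, 0, face_zero_mem hF hne, by simp⟩
  | zero => exact ⟨0, face_zero_mem hF hne, 0, face_zero_mem hF hne, by simp⟩
  | add a b ha hb iha ihb =>
    obtain ⟨u, hu, v, hv, rfl⟩ := iha
    obtain ⟨u', hu', v', hv', rfl⟩ := ihb
    exact ⟨u + u', face_add_mem hF hu hu', v + v', face_add_mem hF hv hv', by abel⟩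
  | smul c a ha iha =>
    obtain ⟨u, hu, v, hv, rfl⟩ := iha
    rcases le_or_gt 0 c with hc | hc
    · exact ⟨c • u, hF.2.2.1 u hu c hc, c • v, hF.2.2.1 v hv c hc, by rw [smul_sub]⟩
    · refine ⟨(-c) • v, hF.2.2.1 v hv (-c) (by linarith), (-c) • u,
        hF.2.2.1 u hu (-c) (by linarith), ?_⟩
      rw [smul_sub, neg_smul, neg_smul]; abel

lemma face_eq_inter_span {C F : Set (Matrix (Fin n) (Fin n) ℝ)}
    (hF : IsFace C F) (hne : F.Nonempty) :
    F = C ∩ (Submodule.span ℝ F : Set _) := by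
  apply Set.Subset.antisymm
  · exact fun x hx => ⟨hF.1 hx, Submodule.subset_span hx⟩
  · rintro x ⟨hxC, hxS⟩
    obtain ⟨u, hu, v, hv, rfl⟩ := span_face_sub hF hne hxS
    have hsum : (u - v) + v ∈ F := by simpa using hu
    exact (hF.2.2.2 _ hxC _ (hF.1 hv) hsum).1

/-- the symmetric matrices as a submodule -/
def symSub (n : ℕ) : Submodule ℝ (Matrix (Fin n) (Fin n) ℝ) where
  carrier := {A | A.IsSymm}
  add_mem' := fun ha hb => ha.add hb
  zero_mem' := Matrix.isSymm_zero
  smul_mem' := fun c A hA => by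
    show (c • A).IsSymm
    unfold Matrix.IsSymm at hA ⊢
    rw [Matrix.transpose_smul, hA]

/-- a version of `kap_surj` producing a pair -/
lemma kap_surj' {m : ℕ} (hm : m < triN n) :
    ∃ p : ℕ × ℕ, p.1 ≤ p.2 ∧ p.2 < n ∧ kap p.1 p.2 = m := by
  obtain ⟨i, j, h1, h2, h3⟩ := kap_surj hm
  exact ⟨(i, j), h1, h2, h3⟩

noncomputable def iot (m : Fin (triN n)) : Fin n × Fin n :=
  (⟨(kap_surj' m.2).choose.1,
      lt_of_le_of_lt (kap_surj' m.2).choose_spec.1 (kap_surj' m.2).choose_spec.2.1⟩,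
   ⟨(kap_surj' m.2).choose.2, (kap_surj' m.2).choose_spec.2.1⟩)

lemma iot_spec (m : Fin (triN n)) :
    ((iot m).1 : ℕ) ≤ ((iot m).2 : ℕ) ∧ kap ((iot m).1 : ℕ) ((iot m).2 : ℕ) = (m : ℕ) := by
  exact ⟨(kap_surj' m.2).choose_spec.1, (kap_surj' m.2).choose_spec.2.2⟩

noncomputable def phiMap (n : ℕ) : Matrix (Fin n) (Fin n) ℝ →ₗ[ℝ] (Fin (triN n) → ℝ) where
  toFun A := fun m => A (iot m).1 (iot m).2
  map_add' A B := by ext m; simp [Matrix.add_apply]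
  map_smul' c A := by ext m; simp [Matrix.smul_apply]

lemma phi_inj_symm {A : Matrix (Fin n) (Fin n) ℝ} (hA : A.IsSymm)
    (h0 : phiMap n A = 0) : A = 0 := by
  have key : ∀ i j : Fin n, (i : ℕ) ≤ (j : ℕ) → A i j = 0 := by
    intro i j hij
    have hlt : kap i j < triN n := kap_lt hij j.isLt
    set m : Fin (triN n) := ⟨kap i j, hlt⟩ with hm
    have hs := iot_spec (n := n) m
    have heq := kap_inj hs.1 hij hs.2
    have h1 : (iot m).1 = i := Fin.ext heq.1
    have h2 : (iot m).2 = j := Fin.ext heq.2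
    have := congrFun h0 m
    simp only [phiMap, LinearMap.coe_mk, AddHom.coe_mk, Pi.zero_apply] at this
    rwa [h1, h2] at this
  ext i j
  rcases le_or_gt (i : ℕ) (j : ℕ) with h | h
  · simpa using key i j h
  · have := key j i (le_of_lt h)
    rw [← hA.apply j i] at this
    simpa using this

lemma finrank_symSub_le : Module.finrank ℝ (symSub n) ≤ triN n := by
  have hinj : Function.Injective ((phiMap n).comp (symSub n).subtype) := by
    rw [← LinearMap.ker_eq_bot]
    rw [LinearMap.ker_eq_bot']
    rintro ⟨A, hA⟩ h0
    have : A = 0 := phi_inj_symm hA h0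
    exact Subtype.ext this
  calc Module.finrank ℝ (symSub n) ≤ Module.finrank ℝ (Fin (triN n) → ℝ) :=
        LinearMap.finrank_le_finrank_of_injective hinj
    _ = triN n := Module.finrank_fin_fun ℝ

lemma chain_bound {ℓ : ℕ} {C : Set (Matrix (Fin n) (Fin n) ℝ)}
    (hC : C ⊆ {A | A.IsSymm}) {F : Fin ℓ → Set (Matrix (Fin n) (Fin n) ℝ)}
    (h : IsFaceChain C ℓ F) : ℓ ≤ n * (n + 1) / 2 + 1 := by
  rcases Nat.eq_zero_or_pos ℓ with rfl | hpos
  · omega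
  set M : Fin ℓ → Submodule ℝ (Matrix (Fin n) (Fin n) ℝ) :=
    fun i => Submodule.span ℝ (F i) with hM
  have hMmono : StrictMono M := by
    intro a b hab
    have hle : M a ≤ M b := Submodule.span_mono (le_of_lt (h.1 hab))
    refine lt_of_le_of_ne hle (fun he => ?_)
    have h1 := face_eq_inter_span (h.2 a).1 (h.2 a).2
    have h2 := face_eq_inter_span (h.2 b).1 (h.2 b).2
    have he' : Submodule.span ℝ (F a) = Submodule.span ℝ (F b) := he
    have hFeq : F a = F b := by rw [h1, h2, he']
    exact absurd hFeq (ne_of_lt (h.1 hab))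
  have hrank : ∀ m (hm : m < ℓ), m ≤ Module.finrank ℝ (M ⟨m, hm⟩) := by
    intro m
    induction m with
    | zero => intro _; omega
    | succ p ih =>
      intro hm
      have hp : p < ℓ := by omega
      have hlt : M ⟨p, hp⟩ < M ⟨p + 1, hm⟩ := hMmono (by simp [Fin.lt_def])
      have := Submodule.finrank_lt_finrank_of_lt hlt
      have := ih hp
      omega
  have hlast := hrank (ℓ - 1) (by omega)
  have htop : Module.finrank ℝ (M ⟨ℓ - 1, by omega⟩) ≤ triN n := by
    have hsub : M ⟨ℓ - 1, by omega⟩ ≤ symSub n := by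
      rw [hM]
      apply Submodule.span_le.mpr
      exact fun x hx => hC ((h.2 _).1.1 hx)
    calc Module.finrank ℝ (M ⟨ℓ - 1, by omega⟩) ≤ Module.finrank ℝ (symSub n) :=
          Submodule.finrank_mono hsub
      _ ≤ triN n := finrank_symSub_le
  have : triN n = n * (n + 1) / 2 := rfl
  omega

end Upper

lemma dnn_symm {n : ℕ} : DoublyNonnegative n ⊆ {A : Matrix (Fin n) (Fin n) ℝ | A.IsSymm} := by
  intro A hA
  have h : A.conjTranspose = A := hA.1.1
  rw [Matrix.conjTranspose_eq_transpose_of_trivial] at h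
  exact h

lemma exists_chain (n : ℕ) :
    ∃ F : Fin (n * (n + 1) / 2 + 1) → Set (Matrix (Fin n) (Fin n) ℝ),
      IsFaceChain (DoublyNonnegative n) (n * (n + 1) / 2 + 1) F := by
  refine ⟨fun k => Fch n k, ?_, fun k => ⟨Fch_isFace n k, Fch_nonempty n k⟩⟩
  intro k l hkl
  have hkl' : (k : ℕ) < (l : ℕ) := hkl
  have hsub : Fch n (k : ℕ) ⊆ Fch n (l : ℕ) := Fch_mono (le_of_lt hkl')
  have hkN : (k : ℕ) < triN n := by
    have h1 : (l : ℕ) ≤ n * (n + 1) / 2 := Nat.lt_succ_iff.mp l.isLt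
    have h2 : triN n = n * (n + 1) / 2 := rfl
    omega
  obtain ⟨i, j, hij, hjn, hkij⟩ := kap_surj hkN
  have hin : i < n := lt_of_le_of_lt hij hjn
  obtain ⟨W, hWl, hWij⟩ :=
    witness (i := ⟨i, hin⟩) (j := ⟨j, hjn⟩) hij (k := (l : ℕ)) (by simp only [Fin.val_mk]; omega)
  have hWnotk : W ∉ Fch n (k : ℕ) := by
    intro hW
    exact hWij (hW.2 ⟨i, hin⟩ ⟨j, hjn⟩ hij (by simp only [Fin.val_mk]; omega))
  exact lt_of_le_of_ne hsub (fun he => hWnotk (by rw [show Fch n (k:ℕ) = Fch n (l:ℕ) from he]; exact hWl))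

/-- The longest strictly ascending chain of nonempty faces of the doubly nonnegative
cone `D^n` has length `n(n+1)/2 + 1`, the maximum possible for any closed convex cone
contained in the space `S^n` of symmetric matrices. -/
theorem stmt14 {n : ℕ} :
    (∃ F : Fin (n * (n + 1) / 2 + 1) → Set (Matrix (Fin n) (Fin n) ℝ),
        IsFaceChain (DoublyNonnegative n) (n * (n + 1) / 2 + 1) F) ∧
      (∀ ℓ (F : Fin ℓ → Set (Matrix (Fin n) (Fin n) ℝ)),
        IsFaceChain (DoublyNonnegative n) ℓ F → ℓ ≤ n * (n + 1) / 2 + 1) ∧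
      ∀ C : Set (Matrix (Fin n) (Fin n) ℝ),
        (IsClosed C ∧ Convex ℝ C ∧ ∀ x ∈ C, ∀ t : ℝ, 0 ≤ t → t • x ∈ C) →
        C ⊆ {A | A.IsSymm} →
        ∀ ℓ (F : Fin ℓ → Set (Matrix (Fin n) (Fin n) ℝ)),
          IsFaceChain C ℓ F → ℓ ≤ n * (n + 1) / 2 + 1 := by
  refine ⟨exists_chain n, fun ℓ F h => chain_bound dnn_symm h,
    fun C _ hC ℓ F h => chain_bound hC h⟩
end
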